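/- arXiv:2508.03808 — 2 statements merged into one kernel-verified Lean document; each statement's English description precedes it below -/
import Mathlib

section
/- Let ℍ denote the real quaternions and let m ≤ n be natural numbers. Equip ℍ^k with the ℓ² norm, i.e. the norm of PiLp 2 (fun _ : Fin k => ℍ), and regard it as an ℍ-module with componentwise scalar multiplication. Then the group of ℍ-linear isometric equivalences of ℍ^n acts transitively, by postcomposition, on the set of ℍ-linear isometric embeddings from ℍ^m to ℍ^n: for any two ℍ-linear isometries f, g : ℍ^m →ₗᵢ[ℍ] ℍ^n there exists an ℍ-linear isometric equivalence e : ℍ^n ≃ₗᵢ[ℍ] ℍ^n such that e ∘ f = g. -/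
open Quaternion
open scoped RealInnerProductSpace

noncomputable section SympTransAux

private abbrev QS (k : ℕ) := PiLp 2 (fun _ : Fin k => ℍ[ℝ])

private lemma finrank_QS (k : ℕ) : Module.finrank ℍ (QS k) = k := by
  rw [(WithLp.linearEquiv 2 ℍ (∀ _ : Fin k, ℍ)).finrank_eq, Module.finrank_pi ℍ,
    Fintype.card_fin]

private lemma re_mul_comm (a b : ℍ) : (a*b).re = (b*a).re := by
  simp [Quaternion.re_mul]; ring

private lemma inner_smul_adjoint {k : ℕ} (x y : QS k) (q : ℍ) :
    ⟪x, q • y⟫ = ⟪star q • x, y⟫ := by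
  simp only [PiLp.inner_apply]
  refine Finset.sum_congr rfl fun i _ => ?_
  show ((x i) * star (q * y i)).re = ((star q * x i) * star (y i)).re
  rw [star_mul, ← mul_assoc, re_mul_comm, ← mul_assoc]

private lemma exists_unit_orth {k : ℕ} (V : Submodule ℍ (QS k)) (hV : V ≠ ⊤) :
    ∃ u : QS k, ‖u‖ = 1 ∧ ∀ v ∈ V, ⟪v, u⟫ = 0 := by
  set W : Submodule ℝ (QS k) := V.restrictScalars ℝ with hW
  have hWne : W ≠ ⊤ := by
    intro h
    apply hV
    rw [Submodule.eq_top_iff'] at h ⊢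
    exact fun x => h x
  have hbot : Wᗮ ≠ ⊥ := by
    intro h
    exact hWne (Submodule.orthogonal_eq_bot_iff.mp h)
  obtain ⟨x, hxW, hx0⟩ := Submodule.exists_mem_ne_zero_of_ne_bot hbot
  refine ⟨(‖x‖⁻¹ : ℝ) • x, norm_smul_inv_norm hx0, fun v hv => ?_⟩
  rw [real_inner_smul_right]
  have := (Submodule.mem_orthogonal W x).mp hxW v hv
  rw [this, mul_zero]

private lemma extend_step {m n : ℕ} (hmn : m < n) (f : QS m →ₗᵢ[ℍ] QS n) :
    ∃ f' : QS (m+1) →ₗᵢ[ℍ] QS n,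
      ∀ x : QS m, f' (show QS (m+1) from WithLp.toLp 2 (Fin.snoc (α := fun _ => ℍ) x.ofLp 0)) = f x := by
  have hr : LinearMap.range f.toLinearMap ≠ ⊤ := by
    intro h
    have h1 := LinearMap.finrank_range_le f.toLinearMap
    rw [h, finrank_top, finrank_QS, finrank_QS] at h1
    omega
  obtain ⟨u, hu1, hu0⟩ := exists_unit_orth _ hr
  set T : QS (m+1) →ₗ[ℍ] QS m :=
    ((WithLp.linearEquiv 2 ℍ (∀ _ : Fin m, ℍ)).symm.toLinearMap.comp
      (LinearMap.funLeft ℍ ℍ Fin.castSucc)).comp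
      (WithLp.linearEquiv 2 ℍ (∀ _ : Fin (m+1), ℍ)).toLinearMap with hT
  have hTapp : ∀ (x : QS (m+1)) (i : Fin m), T x i = x i.castSucc := fun _ _ => rfl
  set lastM : QS (m+1) →ₗ[ℍ] ℍ :=
    (LinearMap.proj (Fin.last m)).comp
      (WithLp.linearEquiv 2 ℍ (∀ _ : Fin (m+1), ℍ)).toLinearMap with hlast
  set L : QS (m+1) →ₗ[ℍ] QS n :=
    f.toLinearMap.comp T + (LinearMap.toSpanSingleton ℍ (QS n) u).comp lastM with hL
  have hLapp : ∀ x : QS (m+1), L x = f (T x) + x (Fin.last m) • u := fun _ => rfl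
  have hnorm : ∀ x : QS (m+1), ‖L x‖ = ‖x‖ := by
    intro x
    have horth : ⟪(f (T x) : QS n), x (Fin.last m) • u⟫ = 0 := by
      rw [inner_smul_adjoint, ← f.map_smul]
      exact hu0 _ (LinearMap.mem_range_self f.toLinearMap _)
    have hsq : ‖L x‖^2 = ‖x‖^2 := by
      rw [hLapp, norm_add_sq_real, horth, f.norm_map, norm_smul, hu1, mul_one,
        mul_zero, add_zero]
      rw [PiLp.norm_sq_eq_of_L2 _ x, Fin.sum_univ_castSucc,
        PiLp.norm_sq_eq_of_L2 _ (T x)]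
      simp only [hTapp]
    calc ‖L x‖ = Real.sqrt (‖L x‖^2) := (Real.sqrt_sq (norm_nonneg _)).symm
      _ = Real.sqrt (‖x‖^2) := by rw [hsq]
      _ = ‖x‖ := Real.sqrt_sq (norm_nonneg _)
  refine ⟨⟨L, hnorm⟩, fun x => ?_⟩
  show L (show QS (m+1) from WithLp.toLp 2 (Fin.snoc (α := fun _ => ℍ) x.ofLp 0)) = f x
  rw [hLapp]
  have h1 : (show QS (m+1) from WithLp.toLp 2 (Fin.snoc (α := fun _ => ℍ) x.ofLp 0)) (Fin.last m) = 0 := Fin.snoc_last (α := fun _ => ℍ) (0 : ℍ) x.ofLp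
  have h2 : T (show QS (m+1) from WithLp.toLp 2 (Fin.snoc (α := fun _ => ℍ) x.ofLp 0)) = x := by
    ext i : 1
    rw [hTapp]
    exact Fin.snoc_castSucc (α := fun _ => ℍ) (0 : ℍ) x.ofLp i
  rw [h1, h2, zero_smul, add_zero]

end SympTransAux

/-- The group of `ℍ`-linear isometric equivalences of `ℍ^n` (with the `ℓ²` norm of
`PiLp 2`) acts transitively, by postcomposition, on the `ℍ`-linear isometric embeddings
`ℍ^m →ₗᵢ[ℍ] ℍ^n` for `m ≤ n`. -/
theorem symplectic_group_transitive_on_stiefel (m n : ℕ) (hmn : m ≤ n)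
    (f g : PiLp 2 (fun _ : Fin m => ℍ[ℝ]) →ₗᵢ[ℍ[ℝ]] PiLp 2 (fun _ : Fin n => ℍ[ℝ])) :
    ∃ e : PiLp 2 (fun _ : Fin n => ℍ[ℝ]) ≃ₗᵢ[ℍ[ℝ]] PiLp 2 (fun _ : Fin n => ℍ[ℝ]),
      (⇑e ∘ ⇑f) = ⇑g := by
  suffices H : ∀ k m', m' + k = n →
      ∀ f g : QS m' →ₗᵢ[ℍ] QS n, ∃ e : QS n ≃ₗᵢ[ℍ] QS n, (⇑e ∘ ⇑f) = ⇑g by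
    exact H (n - m) m (by omega) f g
  intro k
  induction k with
  | zero =>
    intro m' hm' f g
    have hmn' : m' = n := by omega
    subst hmn'
    have hfs : Function.Surjective f :=
      (LinearMap.injective_iff_surjective (f := f.toLinearMap)).mp f.injective
    have hgs : Function.Surjective g :=
      (LinearMap.injective_iff_surjective (f := g.toLinearMap)).mp g.injective
    refine ⟨(LinearIsometryEquiv.ofSurjective f hfs).symm.trans
      (LinearIsometryEquiv.ofSurjective g hgs), funext fun x => ?_⟩
    have h1 : (LinearIsometryEquiv.ofSurjective f hfs).symm (f x) = x := by
      have : (LinearIsometryEquiv.ofSurjective f hfs) x = f x := rfl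
      rw [← this, LinearIsometryEquiv.symm_apply_apply]
    simp only [Function.comp_apply, LinearIsometryEquiv.trans_apply, h1]
    rfl
  | succ k ih =>
    intro m' hm' f g
    have hlt : m' < n := by omega
    obtain ⟨f', hf'⟩ := extend_step hlt f
    obtain ⟨g', hg'⟩ := extend_step hlt g
    obtain ⟨e, he⟩ := ih (m'+1) (by omega) f' g'
    refine ⟨e, funext fun x => ?_⟩
    have h := congrFun he (show QS (m'+1) from WithLp.toLp 2 (Fin.snoc (α := fun _ => ℍ) x.ofLp 0))
    simp only [Function.comp_apply] at h ⊢
    rw [hf' x, hg' x] at h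
    exact h
end

section
/- Let m ≤ n be natural numbers, and let ι : EuclideanSpace ℝ (Fin m) →ₗᵢ[ℝ] EuclideanSpace ℝ (Fin n) be the standard inclusion, given by (ι x) i = x ⟨i, h⟩ if h : (i : ℕ) < m and (ι x) i = 0 otherwise. Consider the action of the group G(n) of linear isometric equivalences of EuclideanSpace ℝ (Fin n) on linear isometries by postcomposition. Then the stabilizer subgroup { e ∈ G(n) | e ∘ ι = ι } is isomorphic, as a group, to the group G(n−m) of linear isometric equivalences of EuclideanSpace ℝ (Fin (n−m)). -/
open Submodule RealInnerProductSpace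

section Aux

variable {E : Type*} [NormedAddCommGroup E] [InnerProductSpace ℝ E] [FiniteDimensional ℝ E]
  (K : Submodule ℝ E)

/-- Restriction of an isometric equivalence preserving `Kᗮ` (both ways) to `Kᗮ`. -/
noncomputable def restrictOrth (e : E ≃ₗᵢ[ℝ] E) (h : ∀ v ∈ Kᗮ, e v ∈ Kᗮ)
    (h' : ∀ v ∈ Kᗮ, e.symm v ∈ Kᗮ) : Kᗮ ≃ₗᵢ[ℝ] Kᗮ where
  toLinearEquiv :=
    { toFun := fun v => ⟨e v, h v v.2⟩
      invFun := fun v => ⟨e.symm v, h' v v.2⟩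
      map_add' := fun u v => Subtype.ext (by simp)
      map_smul' := fun c v => Subtype.ext (by simp)
      left_inv := fun v => Subtype.ext (by simp)
      right_inv := fun v => Subtype.ext (by simp) }
  norm_map' := fun v => by
    simpa [Submodule.coe_norm] using e.norm_map (v : E)

/-- Extension of an isometric equivalence of `Kᗮ` to `E`, fixing `K` pointwise. -/
noncomputable def extendOrthFun (g : Kᗮ ≃ₗᵢ[ℝ] Kᗮ) : E →ₗ[ℝ] E :=
  K.subtype ∘ₗ (orthogonalProjection K : E →L[ℝ] K).toLinearMap +
    Kᗮ.subtype ∘ₗ (g.toLinearEquiv : Kᗮ →ₗ[ℝ] Kᗮ) ∘ₗ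
      (orthogonalProjection Kᗮ : E →L[ℝ] Kᗮ).toLinearMap

lemma extendOrthFun_apply (g : Kᗮ ≃ₗᵢ[ℝ] Kᗮ) (x : E) :
    extendOrthFun K g x =
      (orthogonalProjection K x : E) + (g (orthogonalProjection Kᗮ x) : E) := rfl

lemma projK_add (a : K) (b : Kᗮ) :
    orthogonalProjection K ((a : E) + (b : E)) = a := by
  rw [map_add, orthogonalProjection_mem_subspace_eq_self,
    orthogonalProjection_mem_subspace_orthogonalComplement_eq_zero b.2, add_zero]

lemma projKo_add (a : K) (b : Kᗮ) :
    orthogonalProjection Kᗮ ((a : E) + (b : E)) = b := by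
  rw [map_add, orthogonalProjection_mem_subspace_eq_self,
    Submodule.orthogonalProjectionOnto_orthogonal_apply_eq_zero a.2, zero_add]

lemma extendOrthFun_comp (g g' : Kᗮ ≃ₗᵢ[ℝ] Kᗮ) (x : E) :
    extendOrthFun K g (extendOrthFun K g' x) =
      (orthogonalProjection K x : E) + (g (g' (orthogonalProjection Kᗮ x)) : E) := by
  rw [extendOrthFun_apply, extendOrthFun_apply, projK_add, projKo_add]

lemma extendOrthFun_norm (g : Kᗮ ≃ₗᵢ[ℝ] Kᗮ) (x : E) :
    ‖extendOrthFun K g x‖ = ‖x‖ := by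
  have h1 : ‖extendOrthFun K g x‖ ^ 2 = ‖x‖ ^ 2 := by
    rw [extendOrthFun_apply]
    have horth : ⟪(orthogonalProjection K x : E), (g (orthogonalProjection Kᗮ x) : E)⟫ = 0 :=
      (K.mem_orthogonal _).1 (g (orthogonalProjection Kᗮ x)).2 _ (orthogonalProjection K x).2
    rw [@norm_add_sq_real, horth]
    have := norm_sq_eq_add_norm_sq_projection x K
    have hg : ‖(g (orthogonalProjection Kᗮ x) : E)‖ = ‖(orthogonalProjection Kᗮ x : E)‖ :=
      g.norm_map (orthogonalProjection Kᗮ x)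
    simp only [Submodule.coe_norm] at this ⊢
    rw [hg]
    linarith
  have h2 := norm_nonneg (extendOrthFun K g x)
  have h3 := norm_nonneg x
  nlinarith

/-- Extension of an isometric equivalence of `Kᗮ` to `E` as an isometric equivalence. -/
noncomputable def extendOrth (g : Kᗮ ≃ₗᵢ[ℝ] Kᗮ) : E ≃ₗᵢ[ℝ] E where
  toLinearEquiv :=
    { toFun := extendOrthFun K g
      map_add' := map_add _
      map_smul' := map_smul _
      invFun := extendOrthFun K g.symm
      left_inv := fun x => by
        show extendOrthFun K g.symm (extendOrthFun K g x) = x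
        rw [extendOrthFun_comp]
        simp [(Submodule.starProjection_add_starProjection_orthogonal (K := K) x)]
      right_inv := fun x => by
        show extendOrthFun K g (extendOrthFun K g.symm x) = x
        rw [extendOrthFun_comp]
        simp [(Submodule.starProjection_add_starProjection_orthogonal (K := K) x)] }
  norm_map' := extendOrthFun_norm K g

lemma extendOrth_apply (g : Kᗮ ≃ₗᵢ[ℝ] Kᗮ) (x : E) :
    extendOrth K g x =
      (orthogonalProjection K x : E) + (g (orthogonalProjection Kᗮ x) : E) := rfl

lemma extendOrth_fix (g : Kᗮ ≃ₗᵢ[ℝ] Kᗮ) (x : E) (hx : x ∈ K) :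
    extendOrth K g x = x := by
  rw [extendOrth_apply, Submodule.coe_orthogonalProjectionOnto_apply,
    Submodule.starProjection_eq_self_iff.2 hx,
    Submodule.orthogonalProjectionOnto_orthogonal_apply_eq_zero hx]
  simp

/-- Conjugation by a linear isometric equivalence, as a group isomorphism. -/
noncomputable def conjLinearIsometryEquiv {F : Type*} [NormedAddCommGroup F]
    [InnerProductSpace ℝ F] (φ : E ≃ₗᵢ[ℝ] F) : (E ≃ₗᵢ[ℝ] E) ≃* (F ≃ₗᵢ[ℝ] F) where
  toFun a := (φ.symm.trans a).trans φ
  invFun b := (φ.trans b).trans φ.symm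
  left_inv a := by ext x; simp
  right_inv b := by ext x; simp
  map_mul' a b := by
    ext x
    simp [LinearIsometryEquiv.coe_mul]

end Aux


/-- The stabilizer, inside the group of linear isometric equivalences of
`EuclideanSpace ℝ (Fin n)`, of a linear isometric embedding
`ι : EuclideanSpace ℝ (Fin m) →ₗᵢ[ℝ] EuclideanSpace ℝ (Fin n)` under the
postcomposition action. -/
noncomputable def stabilizerOfInclusion {m n : ℕ}
    (ι : EuclideanSpace ℝ (Fin m) →ₗᵢ[ℝ] EuclideanSpace ℝ (Fin n)) :
    Subgroup (EuclideanSpace ℝ (Fin n) ≃ₗᵢ[ℝ] EuclideanSpace ℝ (Fin n)) where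
  carrier := { e | ⇑e ∘ ⇑ι = ⇑ι }
  one_mem' := by
    funext x
    simp
  mul_mem' := by
    intro a b ha hb
    funext x
    have hbx := congrFun hb x
    have hax := congrFun ha x
    simp only [Function.comp_apply] at hbx hax ⊢
    simp only [LinearIsometryEquiv.coe_mul, Function.comp_apply]
    rw [hbx]
    simpa using hax
  inv_mem' := by
    intro a ha
    funext x
    have hax := congrFun ha x
    simp only [Function.comp_apply] at hax ⊢
    simp only [LinearIsometryEquiv.coe_inv]
    have h2 : a.symm (a (ι x)) = ι x := a.symm_apply_apply _
    rw [hax] at h2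
    exact h2

/-- For `m ≤ n` and `ι` the standard inclusion `ℝ^m → ℝ^n`, the stabilizer of `ι` in
the group `G(n)` of linear isometric equivalences of `EuclideanSpace ℝ (Fin n)` (acting
by postcomposition) is isomorphic, as a group, to the group `G(n - m)` of linear
isometric equivalences of `EuclideanSpace ℝ (Fin (n - m))`. -/
theorem stabilizer_of_standard_inclusion_iso (m n : ℕ) (hmn : m ≤ n)
    (ι : EuclideanSpace ℝ (Fin m) →ₗᵢ[ℝ] EuclideanSpace ℝ (Fin n))
    (hι : ∀ (x : EuclideanSpace ℝ (Fin m)) (i : Fin n),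
      ι x i = if h : (i : ℕ) < m then x ⟨(i : ℕ), h⟩ else 0) :
    Nonempty ((stabilizerOfInclusion ι) ≃*
      (EuclideanSpace ℝ (Fin (n - m)) ≃ₗᵢ[ℝ] EuclideanSpace ℝ (Fin (n - m)))) := by
  classical
  set E := EuclideanSpace ℝ (Fin n)
  set K : Submodule ℝ E := LinearMap.range ι.toLinearMap with hKdef
  have hmemK : ∀ y, ι y ∈ K := fun y => ⟨y, rfl⟩
  have hfix : ∀ (e : E ≃ₗᵢ[ℝ] E), (⇑e ∘ ⇑ι = ⇑ι) → ∀ x ∈ K, e x = x := by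
    rintro e he x ⟨y, rfl⟩
    exact congrFun he y
  have hsymm : ∀ (e : E ≃ₗᵢ[ℝ] E), (⇑e ∘ ⇑ι = ⇑ι) → (⇑e.symm ∘ ⇑ι = ⇑ι) := by
    intro e he
    funext y
    have h := congrFun he y
    simp only [Function.comp_apply] at h ⊢
    rw [← h, e.symm_apply_apply]
    exact h.symm
  have hmaps : ∀ (e : E ≃ₗᵢ[ℝ] E), (⇑e ∘ ⇑ι = ⇑ι) → ∀ v ∈ Kᗮ, e v ∈ Kᗮ := by
    intro e he v hv
    rw [Submodule.mem_orthogonal]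
    rintro u ⟨y, rfl⟩
    show ⟪(ι y : E), e v⟫ = 0
    rw [show (ι y : E) = e (ι y) from (congrFun he y).symm, e.inner_map_map]
    exact (Submodule.mem_orthogonal K v).1 hv _ (hmemK y)
  have hdim : Module.finrank ℝ (↥Kᗮ) = n - m := by
    have h1 := K.finrank_add_finrank_orthogonal
    have h2 : Module.finrank ℝ K = m := by
      rw [LinearMap.finrank_range_of_inj ι.injective]
      exact finrank_euclideanSpace_fin
    have h3 : Module.finrank ℝ E = n := finrank_euclideanSpace_fin
    omega
  let φ : (↥Kᗮ) ≃ₗᵢ[ℝ] EuclideanSpace ℝ (Fin (n - m)) :=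
    ((stdOrthonormalBasis ℝ (↥Kᗮ)).reindex (finCongr hdim)).repr
  let Ψ : (stabilizerOfInclusion ι) ≃* ((↥Kᗮ) ≃ₗᵢ[ℝ] (↥Kᗮ)) :=
  { toFun := fun e => restrictOrth K e.1 (hmaps e.1 e.2)
      (fun v hv => hmaps e.1.symm (hsymm e.1 e.2) v hv)
    invFun := fun g => ⟨extendOrth K g, by
      show ⇑(extendOrth K g) ∘ ⇑ι = ⇑ι
      funext y
      exact extendOrth_fix K g (ι y) (hmemK y)⟩
    left_inv := fun e => by
      apply Subtype.ext
      apply LinearIsometryEquiv.ext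
      intro x
      show (orthogonalProjection K x : E) + e.1 (orthogonalProjection Kᗮ x : E) = e.1 x
      rw [← hfix e.1 e.2 _ (orthogonalProjection K x).2, ← map_add,
        Submodule.coe_orthogonalProjectionOnto_apply, Submodule.coe_orthogonalProjectionOnto_apply,
        Submodule.starProjection_add_starProjection_orthogonal]
    right_inv := fun g => by
      apply LinearIsometryEquiv.ext
      intro v
      apply Subtype.ext
      show extendOrth K g (v : E) = (g v : E)
      rw [extendOrth_apply,
        orthogonalProjection_mem_subspace_orthogonalComplement_eq_zero v.2,
        orthogonalProjection_mem_subspace_eq_self]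
      simp
    map_mul' := fun a b => by
      apply LinearIsometryEquiv.ext
      intro v
      apply Subtype.ext
      rfl }
  exact ⟨Ψ.trans (conjLinearIsometryEquiv φ)⟩
end
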